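/- The per-region goodput attains a global maximum at a strictly positive rate: there exists r* > 0 such that G(r*) > 0 and G(r*) ≥ G(r) for all r ≥ 0, where G(r) = r·∫_φ^{φ'} f(γ)·(1 − Ω(γ, r)) dγ (note G(0) = 0, G(r) > 0 for every r > 0, and G(r) → 0 as r → ∞). -/

import Mathlib

open MeasureTheory intervalIntegral Real Filter Topology

/-- Gaussian Q-function: Q(t) = (1/√(2π)) ∫_t^∞ exp(−u²/2) du. -/
noncomputable def Qfun (t : ℝ) : ℝ :=
  (Real.sqrt (2 * Real.pi))⁻¹ * ∫ u in Set.Ioi t, Real.exp (-u ^ 2 / 2)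

/-- Capacity C(γ) = log(1 + P γ) (natural log). -/
noncomputable def Cap (P γ : ℝ) : ℝ := Real.log (1 + P * γ)

/-- Channel dispersion V(γ) = 1 − 1/(1 + P γ)². -/
noncomputable def Vdisp (P γ : ℝ) : ℝ := 1 - 1 / (1 + P * γ) ^ 2

/-- Codeword error probability Ω(γ, r) = Q((C(γ) − r)·√(n/V(γ))). -/
noncomputable def Omega (n P γ r : ℝ) : ℝ :=
  Qfun ((Cap P γ - r) * Real.sqrt (n / Vdisp P γ))

/-- H(γ, r) = −(1/√(2π))·exp(−n(C(γ)−r)²/(2V(γ)))·f(γ)·√(n/V(γ)). -/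
noncomputable def Hfun (n P : ℝ) (f : ℝ → ℝ) (γ r : ℝ) : ℝ :=
  -(Real.sqrt (2 * Real.pi))⁻¹ * Real.exp (-(n * (Cap P γ - r) ^ 2) / (2 * Vdisp P γ)) *
    f γ * Real.sqrt (n / Vdisp P γ)


lemma gauss_eq (u : ℝ) : Real.exp (-u ^ 2 / 2) = Real.exp (-(1/2 : ℝ) * u ^ 2) := by
  ring_nf

lemma gauss_integrable : Integrable (fun u : ℝ => Real.exp (-u ^ 2 / 2)) := by
  simp only [gauss_eq]
  exact integrable_exp_neg_mul_sq (by norm_num)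

lemma gauss_total : (∫ u : ℝ, Real.exp (-u ^ 2 / 2)) = Real.sqrt (2 * Real.pi) := by
  simp only [gauss_eq]
  rw [integral_gaussian]
  norm_num [Real.pi_nonneg, mul_comm]

lemma sqrt_two_pi_pos : 0 < Real.sqrt (2 * Real.pi) :=
  Real.sqrt_pos.2 (by positivity)

lemma Qfun_nonneg (t : ℝ) : 0 ≤ Qfun t := by
  apply mul_nonneg (by positivity)
  apply setIntegral_nonneg measurableSet_Ioi
  intro u _; positivity

lemma Qfun_eq (t : ℝ) : Qfun t =
    (Real.sqrt (2 * Real.pi))⁻¹ *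
      (Real.sqrt (2 * Real.pi) - ∫ u in Set.Iic t, Real.exp (-u ^ 2 / 2)) := by
  have htot := integral_Iic_add_Ioi (b := t) (f := fun u : ℝ => Real.exp (-u ^ 2 / 2))
    gauss_integrable.integrableOn gauss_integrable.integrableOn
  rw [gauss_total] at htot
  rw [Qfun, ← htot]; ring

lemma Iic_gauss_pos (t : ℝ) : 0 < ∫ u in Set.Iic t, Real.exp (-u ^ 2 / 2) := by
  rw [setIntegral_pos_iff_support_of_nonneg_ae]
  · have : (Function.support fun u : ℝ => Real.exp (-u ^ 2 / 2)) = Set.univ := by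
      ext u; simp [Function.support, Real.exp_ne_zero]
    rw [this, Set.univ_inter]
    simp [Real.volume_Iic]
  · filter_upwards with u using (Real.exp_pos _).le
  · exact gauss_integrable.integrableOn

lemma Qfun_lt_one (t : ℝ) : Qfun t < 1 := by
  rw [Qfun_eq]
  have h := Iic_gauss_pos t
  have h2 := sqrt_two_pi_pos
  rw [inv_mul_lt_iff₀ h2, mul_one]
  linarith

lemma Qfun_le_one (t : ℝ) : Qfun t ≤ 1 := (Qfun_lt_one t).le

lemma Iic_gauss_le {t : ℝ} (ht : t ≤ 0) :
    (∫ u in Set.Iic t, Real.exp (-u ^ 2 / 2)) ≤ 2 * Real.sqrt Real.pi * Real.exp (-t ^ 2 / 4) := by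
  have key : ∀ u ∈ Set.Iic t, Real.exp (-u ^ 2 / 2) ≤ Real.exp (-t^2/4) * Real.exp (-u ^ 2 / 4) := by
    intro u hu
    rw [← Real.exp_add]
    apply Real.exp_le_exp.2
    have hu' : u ≤ t := Set.mem_Iic.1 hu
    nlinarith
  calc (∫ u in Set.Iic t, Real.exp (-u ^ 2 / 2))
      ≤ ∫ u in Set.Iic t, Real.exp (-t^2/4) * Real.exp (-u ^ 2 / 4) := by
        apply setIntegral_mono_on gauss_integrable.integrableOn
        · apply Integrable.integrableOn
          apply Integrable.const_mul
          have : ∀ u : ℝ, Real.exp (-u ^ 2 / 4) = Real.exp (-(1/4 : ℝ) * u ^ 2) := by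
            intro u; ring_nf
          simp only [this]
          exact integrable_exp_neg_mul_sq (by norm_num)
        · exact measurableSet_Iic
        · exact key
    _ ≤ ∫ u : ℝ, Real.exp (-t^2/4) * Real.exp (-u ^ 2 / 4) := by
        apply setIntegral_le_integral
        · apply Integrable.const_mul
          have : ∀ u : ℝ, Real.exp (-u ^ 2 / 4) = Real.exp (-(1/4 : ℝ) * u ^ 2) := by
            intro u; ring_nf
          simp only [this]
          exact integrable_exp_neg_mul_sq (by norm_num)
        · filter_upwards with u; positivity
    _ = Real.exp (-t^2/4) * ∫ u : ℝ, Real.exp (-(1/4:ℝ) * u ^ 2) := by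
        simp_rw [MeasureTheory.integral_const_mul]
        congr 1; apply MeasureTheory.integral_congr_ae; filter_upwards with u; ring_nf
    _ = Real.exp (-t^2/4) * Real.sqrt (Real.pi / (1/4)) := by rw [integral_gaussian]
    _ = 2 * Real.sqrt Real.pi * Real.exp (-t ^ 2 / 4) := by
        rw [show Real.pi / (1/4 : ℝ) = 4 * Real.pi by ring,
          show (4 : ℝ) * Real.pi = 2^2 * Real.pi by norm_num,
          Real.sqrt_mul (by norm_num), Real.sqrt_sq (by norm_num)]
        ring

lemma one_sub_Qfun_le {t : ℝ} (ht : t ≤ 0) : 1 - Qfun t ≤ 2 * Real.exp (-t ^ 2 / 4) := by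
  rw [Qfun_eq]
  have h2 := sqrt_two_pi_pos
  have h3 := Iic_gauss_le ht
  have hs : Real.sqrt Real.pi ≤ Real.sqrt (2 * Real.pi) := by
    apply Real.sqrt_le_sqrt; linarith [Real.pi_pos]
  have : 1 - (Real.sqrt (2*Real.pi))⁻¹ * (Real.sqrt (2*Real.pi) - ∫ u in Set.Iic t, Real.exp (-u ^ 2 / 2))
      = (Real.sqrt (2*Real.pi))⁻¹ * ∫ u in Set.Iic t, Real.exp (-u ^ 2 / 2) := by
    field_simp
    ring
  rw [this]
  rw [inv_mul_le_iff₀ h2]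
  calc (∫ u in Set.Iic t, Real.exp (-u ^ 2 / 2)) ≤ 2 * Real.sqrt Real.pi * Real.exp (-t ^ 2 / 4) := h3
    _ ≤ 2 * Real.exp (-t^2/4) * Real.sqrt (2 * Real.pi) := by
        have he : (0:ℝ) < Real.exp (-t^2/4) := Real.exp_pos _
        nlinarith [Real.sqrt_nonneg Real.pi]
    _ = Real.sqrt (2 * Real.pi) * (2 * Real.exp (-t^2/4)) := by ring

lemma Qfun_continuous : Continuous Qfun := by
  have hint : ∀ a b : ℝ, IntervalIntegrable (fun u : ℝ => Real.exp (-u ^ 2 / 2)) volume a b :=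
    fun a b => gauss_integrable.intervalIntegrable
  have h1 : Continuous fun t : ℝ => ∫ u in (0:ℝ)..t, Real.exp (-u ^ 2 / 2) :=
    intervalIntegral.continuous_primitive hint 0
  have h2 : ∀ t : ℝ, (∫ u in Set.Iic t, Real.exp (-u ^ 2 / 2)) =
      (∫ u in Set.Iic (0:ℝ), Real.exp (-u ^ 2 / 2)) + ∫ u in (0:ℝ)..t, Real.exp (-u ^ 2 / 2) := by
    intro t
    rw [← integral_Iic_sub_Iic gauss_integrable.integrableOn gauss_integrable.integrableOn]
    ring
  have : Qfun = fun t => (Real.sqrt (2 * Real.pi))⁻¹ *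
      (Real.sqrt (2 * Real.pi) - ((∫ u in Set.Iic (0:ℝ), Real.exp (-u ^ 2 / 2)) +
        ∫ u in (0:ℝ)..t, Real.exp (-u ^ 2 / 2))) := by
    funext t; rw [Qfun_eq, h2]
  rw [this]
  exact continuous_const.mul (continuous_const.sub (continuous_const.add h1))

lemma omega_measurable
 (n P r : ℝ) : Measurable fun γ => Omega n P γ r := by
  apply Qfun_continuous.measurable.comp
  apply Measurable.mul
  · exact (Real.measurable_log.comp
      (measurable_const.add (measurable_const.mul measurable_id))).sub measurable_const
  · exact (measurable_const.div
      ((measurable_const.sub (measurable_const.div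
        (((measurable_const.add (measurable_const.mul measurable_id)).pow_const 2)))))).sqrt

lemma omega_nonneg (n P γ r : ℝ) : 0 ≤ Omega n P γ r := Qfun_nonneg _

lemma omega_lt_one (n P γ r : ℝ) : Omega n P γ r < 1 := Qfun_lt_one _

theorem goodput_attains_max (n P : ℝ) (hn : 0 < n) (hP : 0 < P)
    (f : ℝ → ℝ) (hf : Continuous f) (hfpos : ∀ γ : ℝ, 0 < γ → 0 < f γ)
    (φ φ' : ℝ) (hφ : 0 < φ) (hφφ' : φ < φ') :
    ∃ rstar : ℝ, 0 < rstar ∧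
      0 < rstar * (∫ γ in φ..φ', f γ * (1 - Omega n P γ rstar)) ∧
      ∀ r : ℝ, 0 ≤ r →
        r * (∫ γ in φ..φ', f γ * (1 - Omega n P γ r)) ≤
          rstar * (∫ γ in φ..φ', f γ * (1 - Omega n P γ rstar)) := by
  set G : ℝ → ℝ := fun r => r * (∫ γ in φ..φ', f γ * (1 - Omega n P γ r)) with hGdef
  -- integrability of the integrand
  have hii : ∀ r : ℝ, IntervalIntegrable (fun γ => f γ * (1 - Omega n P γ r)) volume φ φ' := by
    intro r
    rw [intervalIntegrable_iff]
    apply Integrable.mono' (g := fun γ => |f γ|)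
    · exact (intervalIntegrable_iff.mp (hf.abs.intervalIntegrable φ φ'))
    · exact ((hf.measurable.mul
        (measurable_const.sub (omega_measurable n P r))).aestronglyMeasurable).restrict
    · filter_upwards with γ
      have h1 := omega_nonneg n P γ r
      have h2 := (omega_lt_one n P γ r).le
      rw [Real.norm_eq_abs, abs_mul]
      calc |f γ| * |1 - Omega n P γ r| ≤ |f γ| * 1 := by
            apply mul_le_mul_of_nonneg_left _ (abs_nonneg _)
            rw [abs_le]; constructor <;> linarith
        _ = |f γ| := mul_one _
  -- positivity of G on positive rates
  have hGpos : ∀ r : ℝ, 0 < r → 0 < G r := by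
    intro r hr
    apply mul_pos hr
    apply intervalIntegral_pos_of_pos_on (hii r) _ hφφ'
    intro γ hγ
    have hγpos : 0 < γ := hφ.trans hγ.1
    have := omega_lt_one n P γ r
    have := hfpos γ hγpos
    nlinarith
  -- continuity of G
  have hGcont : Continuous G := by
    apply continuous_id.mul
    apply intervalIntegral.continuous_of_dominated_interval
      (bound := fun γ => |f γ|)
    · intro r
      exact ((hf.measurable.mul
        (measurable_const.sub (omega_measurable n P r))).aestronglyMeasurable).restrict
    · intro r
      filter_upwards with γ _
      have h1 := omega_nonneg n P γ r
      have h2 := (omega_lt_one n P γ r).le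
      rw [Real.norm_eq_abs, abs_mul]
      calc |f γ| * |1 - Omega n P γ r| ≤ |f γ| * 1 := by
            apply mul_le_mul_of_nonneg_left _ (abs_nonneg _)
            rw [abs_le]; constructor <;> linarith
        _ = |f γ| := mul_one _
    · exact hf.abs.intervalIntegrable φ φ'
    · filter_upwards with γ _
      apply continuous_const.mul
      apply continuous_const.sub
      exact Qfun_continuous.comp ((continuous_const.sub continuous_id).mul continuous_const)
  -- maximum of f on [φ, φ']
  obtain ⟨γM, hγMmem, hγMmax⟩ := isCompact_Icc.exists_isMaxOn
    (Set.nonempty_Icc.2 hφφ'.le) hf.continuousOn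
  set M : ℝ := f γM with hMdef
  have hMpos : 0 < M := hfpos γM (hφ.trans_le hγMmem.1)
  set C0 : ℝ := Cap P φ' with hC0def
  have hC0pos : 0 < C0 := by
    rw [hC0def, Cap]
    apply Real.log_pos
    nlinarith
  -- upper bound on G for r ≥ C0
  have hGbound : ∀ r : ℝ, C0 ≤ r →
      G r ≤ r * ((φ' - φ) * (M * (2 * Real.exp (-(n * (r - C0) ^ 2) / 4)))) := by
    intro r hr
    have hrpos : 0 ≤ r := hC0pos.le.trans hr
    apply mul_le_mul_of_nonneg_left _ hrpos
    have hpt : ∀ γ ∈ Set.Icc φ φ',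
        f γ * (1 - Omega n P γ r) ≤ M * (2 * Real.exp (-(n * (r - C0) ^ 2) / 4)) := by
      intro γ hγ
      have hγpos : 0 < γ := hφ.trans_le hγ.1
      have h1 : 1 < 1 + P * γ := by nlinarith
      have hVpos : 0 < Vdisp P γ := by
        rw [Vdisp]
        have : 1 / (1 + P * γ) ^ 2 < 1 := by
          rw [div_lt_one (by positivity)]; nlinarith
        linarith
      have hVle : Vdisp P γ ≤ 1 := by
        rw [Vdisp]
        have : 0 < 1 / (1 + P * γ) ^ 2 := by positivity
        linarith
      have hCap : Cap P γ ≤ C0 := by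
        rw [hC0def, Cap, Cap]
        apply Real.log_le_log (by nlinarith)
        nlinarith [hγ.2]
      set t : ℝ := (Cap P γ - r) * Real.sqrt (n / Vdisp P γ) with htdef
      have ht0 : t ≤ 0 := by
        apply mul_nonpos_of_nonpos_of_nonneg
        · linarith
        · exact Real.sqrt_nonneg _
      have htsq : n * (r - C0) ^ 2 ≤ t ^ 2 := by
        have hsq : t ^ 2 = (Cap P γ - r) ^ 2 * (n / Vdisp P γ) := by
          rw [htdef, mul_pow, Real.sq_sqrt (by positivity)]
        rw [hsq]
        have hnd : n ≤ n / Vdisp P γ := by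
          rw [le_div_iff₀ hVpos]; nlinarith
        have h2 : (r - C0) ^ 2 ≤ (Cap P γ - r) ^ 2 := by nlinarith
        have h3 : (0:ℝ) ≤ (r - C0) ^ 2 := sq_nonneg _
        nlinarith [div_pos hn hVpos]
      have hΩ : 1 - Omega n P γ r ≤ 2 * Real.exp (-(n * (r - C0) ^ 2) / 4) := by
        calc 1 - Omega n P γ r ≤ 2 * Real.exp (-t ^ 2 / 4) := one_sub_Qfun_le ht0
          _ ≤ 2 * Real.exp (-(n * (r - C0) ^ 2) / 4) := by
              apply mul_le_mul_of_nonneg_left _ (by norm_num)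
              apply Real.exp_le_exp.2
              linarith
      have h0 : 0 ≤ 1 - Omega n P γ r := by linarith [(omega_lt_one n P γ r).le]
      exact mul_le_mul (hγMmax hγ) hΩ h0 hMpos.le
    have hle := intervalIntegral.integral_mono_on (μ := volume)
      hφφ'.le (hii r) intervalIntegrable_const hpt
    rw [intervalIntegral.integral_const, smul_eq_mul] at hle
    exact hle
  -- the bound tends to zero
  have hc : (0:ℝ) < n / 4 := by linarith
  have key : Tendsto (fun r : ℝ => r * Real.exp (-(n / 4 * r))) atTop (𝓝 0) := by
    have h1 : Tendsto (fun x : ℝ => x * Real.exp (-x)) atTop (𝓝 0) := by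
      simpa using Real.tendsto_pow_mul_exp_neg_atTop_nhds_zero 1
    have h2 : Tendsto (fun r : ℝ => n / 4 * r) atTop atTop :=
      Tendsto.const_mul_atTop hc tendsto_id
    have h3 := ((h1.comp h2).const_mul (n / 4)⁻¹)
    rw [mul_zero] at h3
    apply h3.congr
    intro r
    simp only [Function.comp_apply]
    field_simp
  have htend : Tendsto (fun r : ℝ =>
      r * ((φ' - φ) * (M * (2 * Real.exp (-(n * (r - C0) ^ 2) / 4))))) atTop (𝓝 0) := by
    apply squeeze_zero'
    · filter_upwards [eventually_ge_atTop (0:ℝ)] with r hr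
      have h1 : (0:ℝ) ≤ φ' - φ := by linarith
      exact mul_nonneg hr (mul_nonneg h1 (mul_nonneg hMpos.le (by positivity)))
    · filter_upwards [eventually_ge_atTop (C0 + 1)] with r hr
      have hr0 : 0 ≤ r := by linarith
      have hexp : Real.exp (-(n * (r - C0) ^ 2) / 4) ≤
          Real.exp (n / 4 * C0) * Real.exp (-(n / 4 * r)) := by
        rw [← Real.exp_add]
        apply Real.exp_le_exp.2
        have h : (r - C0) ≤ (r - C0) ^ 2 := by nlinarith
        nlinarith [mul_le_mul_of_nonneg_left h hn.le]
      calc r * ((φ' - φ) * (M * (2 * Real.exp (-(n * (r - C0) ^ 2) / 4))))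
          ≤ r * ((φ' - φ) * (M * (2 * (Real.exp (n / 4 * C0) * Real.exp (-(n / 4 * r)))))) := by
            apply mul_le_mul_of_nonneg_left _ hr0
            apply mul_le_mul_of_nonneg_left _ (by linarith)
            apply mul_le_mul_of_nonneg_left _ hMpos.le
            linarith
        _ = ((φ' - φ) * (M * (2 * Real.exp (n / 4 * C0)))) * (r * Real.exp (-(n / 4 * r))) := by
            ring
    · have := key.const_mul ((φ' - φ) * (M * (2 * Real.exp (n / 4 * C0))))
      rwa [mul_zero] at this
  -- find R beyond which G r ≤ G 1
  have hG1 : 0 < G 1 := hGpos 1 one_pos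
  obtain ⟨R, hR⟩ := Filter.eventually_atTop.1
    (((htend.eventually_lt_const hG1).and (eventually_ge_atTop C0)).and
      (eventually_ge_atTop (1:ℝ)))
  have hRtail : ∀ r : ℝ, max R 1 ≤ r → G r ≤ G 1 := by
    intro r hr
    have hrR : R ≤ r := le_trans (le_max_left _ _) hr
    obtain ⟨⟨hb, hC⟩, _⟩ := hR r hrR
    exact le_of_lt (lt_of_le_of_lt (hGbound r hC) hb)
  -- maximize on the compact interval [0, max R 1]
  set R' : ℝ := max R 1 with hR'def
  have hR'1 : (1:ℝ) ≤ R' := le_max_right _ _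
  obtain ⟨rstar, hrmem, hrmax⟩ := isCompact_Icc.exists_isMaxOn
    (Set.nonempty_Icc.2 (by linarith : (0:ℝ) ≤ R')) hGcont.continuousOn
  have h1mem : (1:ℝ) ∈ Set.Icc (0:ℝ) R' := ⟨by norm_num, hR'1⟩
  have hG1le : G 1 ≤ G rstar := hrmax h1mem
  have hrpos : 0 < rstar := by
    rcases lt_or_ge 0 rstar with h | h
    · exact h
    · exfalso
      have : rstar = 0 := le_antisymm h hrmem.1
      have hz : G rstar = 0 := by rw [this, hGdef]; simp
      linarith
  refine ⟨rstar, hrpos, hGpos rstar hrpos, ?_⟩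
  intro r hr
  rcases le_total r R' with h | h
  · exact hrmax ⟨hr, h⟩
  · exact le_trans (hRtail r h) hG1le
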